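/- Let E ⊂ 𝕋^N be a set of class C² and F ⊂ 𝕋^N a set of finite perimeter. Then there exists a constant C = C(E) > 0, independent of F, such that P_{𝕋^N}(F) − P_{𝕋^N}(E) ≥ −C|E Δ F|. -/

import Mathlib

open MeasureTheory Metric Set Filter
open scoped ENNReal NNReal Topology RealInnerProductSpace

noncomputable section
open scoped Classical

/-- `RN N` models (the universal cover of) the flat torus `𝕋^N`:
periodic subsets of `ℝ^N` represent subsets of `𝕋^N`. -/
abbrev RN (N : ℕ) := EuclideanSpace ℝ (Fin N)

variable (N : ℕ)

/-- the `i`-th standard basis vector -/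
def eV (i : Fin N) : RN N := EuclideanSpace.single i (1 : ℝ)

/-- the integer lattice vector associated to `z : Fin N → ℤ` -/
def intVec (z : Fin N → ℤ) : RN N := ∑ i, (z i : ℝ) • eV N i

/-- the fundamental domain `[0,1)^N` of the unit torus -/
def Qcube : Set (RN N) := {x | ∀ i, x i ∈ Set.Ico (0 : ℝ) 1}

/-- a set representing a subset of the torus, i.e. invariant under integer translations -/
def PerSet (E : Set (RN N)) : Prop := ∀ z : Fin N → ℤ, (fun x => x + intVec N z) ⁻¹' E = E

/-- a function on the torus, i.e. invariant under integer translations -/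
def PerFun {α : Type*} (f : RN N → α) : Prop :=
  ∀ (z : Fin N → ℤ) (x : RN N), f (x + intVec N z) = f x

/-- volume (measure) of a subset of the torus -/
def tvol (E : Set (RN N)) : ℝ≥0∞ := volume (E ∩ Qcube N)

/-- divergence of a vector field -/
def divg (X : RN N → RN N) (x : RN N) : ℝ := ∑ i, fderiv ℝ X x (eV N i) i

/-- the perimeter `P_{𝕋^N}(E)` of `E` in the torus, defined by the
Gauss-Green / distributional definition -/
def tper (E : Set (RN N)) : ℝ≥0∞ :=
  ⨆ X : {X : RN N → RN N // ContDiff ℝ 1 X ∧ PerFun N X ∧ ∀ x, ‖X x‖ ≤ 1},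
    ENNReal.ofReal (∫ x in E ∩ Qcube N, divg N X.1 x)

/-- `α(E,F)`: the `L¹`-distance between two subsets of the torus, modulo translations -/
def adist (E F : Set (RN N)) : ℝ≥0∞ :=
  ⨅ y : RN N, tvol N (symmDiff E ((fun x => y + x) '' F))

/-- `u_E = χ_E - χ_{Eᶜ}` -/
def uInd (E : Set (RN N)) (x : RN N) : ℝ := if x ∈ E then 1 else -1

/-- `m = |E| - |𝕋^N ∖ E|` -/
def mOf (E : Set (RN N)) : ℝ := (tvol N E).toReal - (tvol N Eᶜ).toReal

/-- `v` is the potential `v_E`, i.e. the (periodic, zero-average) weak solution of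
`-Δ v = u_E - m` on the torus -/
structure IsPotential (E : Set (RN N)) (v : RN N → ℝ) : Prop where
  contDiff : ContDiff ℝ 1 v
  periodic : PerFun N v
  zeroAvg : (∫ x in Qcube N, v x) = 0
  weakEq : ∀ φ : RN N → ℝ, ContDiff ℝ (⊤ : ℕ∞) φ → PerFun N φ →
    (∫ x in Qcube N, ⟪gradient v x, gradient φ x⟫) =
      ∫ x in Qcube N, (uInd N E x - mOf N E) * φ x

/-- the Dirichlet energy `∫_{𝕋^N} |∇v|²` -/
def dirichlet (v : RN N → ℝ) : ℝ := ∫ x in Qcube N, ‖gradient v x‖ ^ 2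

/-- the nonlocal isoperimetric functional `J(E) = P(E) + γ ∫ |∇ v_E|²`
(the potential `v = v_E` is passed explicitly) -/
def nlJ (γ : ℝ) (E : Set (RN N)) (v : RN N → ℝ) : ℝ≥0∞ :=
  tper N E + ENNReal.ofReal (γ * dirichlet N v)

/-- signed distance from `∂E`, negative inside `E` -/
def sd (E : Set (RN N)) (x : RN N) : ℝ :=
  if x ∈ E then -Metric.infDist x (frontier E) else Metric.infDist x (frontier E)

/-- `E` is a set of class `C^k`: the signed distance is `C^k` near `∂E`, with unit gradient
on `∂E` -/
def SmoothBdry (k : ℕ∞) (E : Set (RN N)) : Prop :=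
  ∃ U : Set (RN N), IsOpen U ∧ frontier E ⊆ U ∧ ContDiffOn ℝ k (sd N E) U ∧
    ∀ x ∈ frontier E, ‖gradient (sd N E) x‖ = 1

/-- the outer unit normal (extended off `∂E` via the signed distance) -/
def nv (E : Set (RN N)) (x : RN N) : RN N := gradient (sd N E) x

/-- Laplacian -/
def lapl (f : RN N → ℝ) (x : RN N) : ℝ :=
  ∑ i, fderiv ℝ (fun y => fderiv ℝ f y (eV N i)) x (eV N i)

/-- `H_{∂E}`, the sum of the principal curvatures: the Laplacian of the signed distance -/
def meanCurv (E : Set (RN N)) : RN N → ℝ := lapl N (sd N E)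

/-- `|B_{∂E}|²`, the sum of the squares of the principal curvatures: the squared Frobenius
norm of the Hessian of the signed distance -/
def sff2 (E : Set (RN N)) (x : RN N) : ℝ :=
  ∑ i, ∑ j, (fderiv ℝ (fun y => fderiv ℝ (sd N E) y (eV N i)) x (eV N j)) ^ 2

/-- the surface measure `H^{N-1} ⌊ ∂E` (in the torus) -/
def sμ (E : Set (RN N)) : Measure (RN N) := (μH[(N : ℝ) - 1]).restrict (frontier E ∩ Qcube N)

/-- tangential gradient `D_τ φ` on `∂E` -/
def tgrad (E : Set (RN N)) (φ : RN N → ℝ) (x : RN N) : RN N :=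
  gradient φ x - ⟪gradient φ x, nv N E x⟫ • nv N E x

/-- tangential divergence `div_τ X` on `∂E` -/
def tdiv (E : Set (RN N)) (X : RN N → RN N) (x : RN N) : ℝ :=
  divg N X x - ⟪fderiv ℝ X x (nv N E x), nv N E x⟫

/-- `G` is the Green's function of `-Δ` on the torus: `-Δ_y G(x,·) = δ_x - 1`,
`∫ G(x,·) = 0`, in the weak sense -/
structure IsGreen (G : RN N → RN N → ℝ) : Prop where
  zeroAvg : ∀ x, (∫ y in Qcube N, G x y) = 0
  weakEq : ∀ (x : RN N) (φ : RN N → ℝ), ContDiff ℝ (⊤ : ℕ∞) φ → PerFun N φ →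
    (∫ y in Qcube N, ⟪gradient (G x) y, gradient φ y⟫) = φ x - ∫ y in Qcube N, φ y

/-- the quadratic form `∂²J(E)[φ]` -/
def secondVar (γ : ℝ) (E : Set (RN N)) (v : RN N → ℝ) (G : RN N → RN N → ℝ)
    (φ : RN N → ℝ) : ℝ :=
  (∫ x, (‖tgrad N E φ x‖ ^ 2 - sff2 N E x * φ x ^ 2) ∂ sμ N E)
  + 8 * γ * (∫ x, (∫ y, G x y * φ x * φ y ∂ sμ N E) ∂ sμ N E)
  + 4 * γ * ∫ x, ⟪gradient v x, nv N E x⟫ * φ x ^ 2 ∂ sμ N E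

/-- `E` is a regular critical set of `J`: a `C³` (periodic) set satisfying the
Euler-Lagrange equation `H_{∂E} + 4γ v_E = λ` on `∂E` -/
structure IsRegCritical (γ : ℝ) (E : Set (RN N)) (v : RN N → ℝ) : Prop where
  meas : MeasurableSet E
  per : PerSet N E
  smooth : SmoothBdry N 3 E
  pot : IsPotential N E v
  euler : ∃ lam : ℝ, ∀ x ∈ frontier E, meanCurv N E x + 4 * γ * v x = lam

/-- `φ ∈ T^⊥(∂E)`: a (C¹, periodic) function on `∂E` with zero average and orthogonal
to the infinitesimal translations `ν_i` -/
def Tperp (E : Set (RN N)) (φ : RN N → ℝ) : Prop :=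
  ContDiff ℝ 1 φ ∧ PerFun N φ ∧ (∫ x, φ x ∂ sμ N E) = 0 ∧
    (∫ x, φ x • nv N E x ∂ sμ N E) = 0

/-- `J` has positive second variation at `E`: `∂²J(E)[φ] > 0` for all
`φ ∈ T^⊥(∂E) ∖ {0}` -/
def PosSecondVar (γ : ℝ) (E : Set (RN N)) (v : RN N → ℝ) (G : RN N → RN N → ℝ) : Prop :=
  ∀ φ : RN N → ℝ, Tperp N E φ → (∫ x, φ x ^ 2 ∂ sμ N E) ≠ 0 →
    0 < secondVar N γ E v G φ

/-- `H¹(∂E)` norm -/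
def h1norm (E : Set (RN N)) (φ : RN N → ℝ) : ℝ :=
  Real.sqrt ((∫ x, φ x ^ 2 ∂ sμ N E) + ∫ x, ‖tgrad N E φ x‖ ^ 2 ∂ sμ N E)

/-- `L²(∂E)` norm -/
def l2norm (E : Set (RN N)) (φ : RN N → ℝ) : ℝ :=
  Real.sqrt (∫ x, φ x ^ 2 ∂ sμ N E)

/-- `W^{2,p}(∂E)` norm (via tangential derivatives) -/
def w2pNorm (p : ℝ) (E : Set (RN N)) (φ : RN N → ℝ) : ℝ :=
  (∫ x, (|φ x| ^ p + ‖tgrad N E φ x‖ ^ p +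
    (∑ j, ‖tgrad N E (fun y => tgrad N E φ y j) x‖ ^ 2) ^ (p / 2)) ∂ sμ N E) ^ (1 / p)

/-- the normal graph `{x + ψ(x) ν(x) : x ∈ ∂E}` -/
def graphOver (E : Set (RN N)) (ψ : RN N → ℝ) : Set (RN N) :=
  (fun x => x + ψ x • nv N E x) '' frontier E

end

noncomputable section Aux
open MeasureTheory

variable {N : ℕ}

lemma eV_apply (i j : Fin N) : eV N i j = if j = i then 1 else 0 := by
  simp [eV, EuclideanSpace.single_apply]

lemma continuous_coord (i : Fin N) : Continuous fun x : RN N => x i :=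
  (EuclideanSpace.proj i).continuous

lemma measurableSet_Qcube : MeasurableSet (Qcube N) := by
  have : Qcube N = ⋂ i, (fun x : RN N => x i) ⁻¹' Set.Ico (0:ℝ) 1 := by
    ext x; simp [Qcube]
  rw [this]
  exact MeasurableSet.iInter fun i =>
    (continuous_coord i).measurable measurableSet_Ico

lemma isBounded_Qcube : Bornology.IsBounded (Qcube N) := by
  have h : Qcube N ⊆ Metric.closedBall 0 (Real.sqrt N) := by
    intro x hx
    simp only [Metric.mem_closedBall, dist_zero_right]
    have : ‖x‖ = Real.sqrt (∑ i, ‖x i‖ ^ 2) := by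
      rw [EuclideanSpace.norm_eq]
    rw [this]
    apply Real.sqrt_le_sqrt
    calc ∑ i, ‖x i‖ ^ 2 ≤ ∑ _i : Fin N, 1 := by
          apply Finset.sum_le_sum
          intro i _
          have h0 := (hx i).1; have h1 := (hx i).2
          have : |x i| ≤ 1 := by rw [abs_le]; constructor <;> nlinarith
          calc ‖x i‖ ^ 2 = |x i| ^ 2 := by rw [Real.norm_eq_abs]
            _ ≤ 1 ^ 2 := by nlinarith [abs_nonneg (x i)]
            _ = 1 := one_pow 2
      _ = (N : ℝ) := by simp
  exact (Metric.isBounded_closedBall).subset h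

lemma volume_Qcube_lt_top : volume (Qcube N) < ⊤ :=
  isBounded_Qcube.measure_lt_top


lemma intVec_single (i : Fin N) :
    intVec N (fun j => if j = i then 1 else 0) = eV N i := by
  unfold intVec
  rw [Finset.sum_eq_single i]
  · simp
  · intro j _ hj; simp [hj]
  · intro h; exact absurd (Finset.mem_univ i) h

lemma integral_fderiv_eV (f : RN N → ℝ) (hf : ContDiff ℝ 1 f) (hp : PerFun N f) (i : Fin N) :
    ∫ x in Qcube N, fderiv ℝ f x (eV N i) = 0 := by
  obtain ⟨n, rfl⟩ : ∃ n, N = n + 1 := ⟨N - 1, (Nat.succ_pred_eq_of_pos i.pos).symm⟩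
  -- the integrand
  set φ : RN (n+1) → ℝ := fun x => fderiv ℝ f x (eV (n+1) i) with hφdef
  have hφc : Continuous φ :=
    (ContinuousLinearMap.apply ℝ ℝ (eV (n+1) i)).continuous.comp (hf.continuous_fderiv one_ne_zero)
  -- a uniform bound on the closed cube
  obtain ⟨M, hM⟩ : ∃ M, ∀ x ∈ closure (Qcube (n+1)), ‖φ x‖ ≤ M :=
    (isBounded_Qcube.isCompact_closure).exists_bound_of_continuousOn hφc.continuousOn
  have hMQ : ∀ x ∈ Qcube (n+1), ‖φ x‖ ≤ M := fun x hx => hM x (subset_closure hx)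
  -- transfer to the pi space
  set e := (MeasurableEquiv.toLp 2 (Fin (n+1) → ℝ)).symm with he
  have mp : MeasurePreserving e.symm (volume : Measure (Fin (n+1) → ℝ)) volume :=
    (EuclideanSpace.volume_preserving_symm_measurableEquiv_toLp (Fin (n+1))).symm e
  set S : Set (Fin (n+1) → ℝ) := Set.univ.pi fun _ => Set.Ico (0:ℝ) 1 with hSdef
  have hpre : e.symm ⁻¹' (Qcube (n+1)) = S := by
    ext y
    simp only [Set.mem_preimage, hSdef, Set.mem_univ_pi]
    exact ⟨fun h j => h j, fun h j => h j⟩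
  have step1 : ∫ x in Qcube (n+1), φ x
      = ∫ y in S, φ (e.symm y) ∂(volume : Measure (Fin (n+1) → ℝ)) := by
    rw [← mp.setIntegral_preimage_emb e.symm.measurableEmbedding φ (Qcube (n+1)), hpre]
  -- split off coordinate i
  set q := MeasurableEquiv.piFinSuccAbove (fun _ : Fin (n+1) => ℝ) i with hq
  have mp2 : MeasurePreserving q (volume : Measure (Fin (n+1) → ℝ))
      ((volume : Measure ℝ).prod (volume : Measure (Fin n → ℝ))) := by
    rw [volume_pi, volume_pi]
    exact measurePreserving_piFinSuccAbove (fun _ => (volume : Measure ℝ)) i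
  set T : Set (ℝ × (Fin n → ℝ)) :=
    (Set.Ico (0:ℝ) 1) ×ˢ (Set.univ.pi fun _ : Fin n => Set.Ico (0:ℝ) 1) with hTdef
  have hTpre : q ⁻¹' T = S := by
    ext y
    simp only [Set.mem_preimage, hTdef, hSdef, Set.mem_prod, Set.mem_univ_pi]
    have hqy : q y = (y i, fun j => y (i.succAbove j)) := rfl
    rw [hqy]
    constructor
    · rintro ⟨h1, h2⟩
      exact (Fin.forall_iff_succAbove i).2 ⟨h1, h2⟩
    · intro h
      exact ⟨h i, fun j => h (i.succAbove j)⟩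
  set ψ : (Fin (n+1) → ℝ) → ℝ := fun y => φ (e.symm y) with hψdef
  set g : ℝ × (Fin n → ℝ) → ℝ := fun z => ψ (q.symm z) with hgdef
  have step2 : ∫ y in S, ψ y ∂(volume : Measure (Fin (n+1) → ℝ))
      = ∫ z in T, g z ∂((volume : Measure ℝ).prod (volume : Measure (Fin n → ℝ))) := by
    rw [← mp2.setIntegral_preimage_emb q.measurableEmbedding g T, hTpre]
    congr 1
    ext y
    simp [hgdef]
  -- the key line computation
  have hmess : MeasurableSet T :=
    measurableSet_Ico.prod (MeasurableSet.univ_pi fun _ => measurableSet_Ico)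
  have hSsub : ∀ y ∈ S, e.symm y ∈ Qcube (n+1) := by
    intro y hy
    have : y ∈ e.symm ⁻¹' (Qcube (n+1)) := hpre ▸ hy
    exact this
  have hgmeas : Measurable g :=
    (hφc.measurable.comp e.symm.measurable).comp q.symm.measurable
  have hint : Integrable (T.indicator g)
      ((volume : Measure ℝ).prod (volume : Measure (Fin n → ℝ))) := by
    rw [integrable_indicator_iff hmess]
    apply Measure.integrableOn_of_bounded (M := M)
    · rw [hTdef, Measure.prod_prod]
      simp [Real.volume_Ico, volume_pi, Measure.pi_pi]
    · exact hgmeas.aestronglyMeasurable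
    · filter_upwards [ae_restrict_mem hmess] with z hz
      have hzS : q.symm z ∈ S := by
        rw [← hTpre]
        simpa using hz
      exact hMQ _ (hSsub _ hzS)
  -- for each fixed y', the inner integral vanishes by periodicity
  have inner_zero : ∀ y' : Fin n → ℝ, (∫ t : ℝ, T.indicator g (t, y')) = 0 := by
    intro y'
    by_cases hy : y' ∈ (Set.univ.pi fun _ : Fin n => Set.Ico (0:ℝ) 1)
    · have hind : ∀ t : ℝ, T.indicator g (t, y')
          = (Set.Ico (0:ℝ) 1).indicator (fun t => g (t, y')) t := by
        intro t
        by_cases ht : t ∈ Set.Ico (0:ℝ) 1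
        · rw [Set.indicator_of_mem ht, Set.indicator_of_mem (by exact ⟨ht, hy⟩)]
        · rw [Set.indicator_of_notMem ht, Set.indicator_of_notMem (by
            intro hmem; exact ht hmem.1)]
      rw [integral_congr_ae (Filter.Eventually.of_forall hind),
        integral_indicator measurableSet_Ico]
      -- now the line integral
      set c : RN (n+1) := e.symm (i.insertNth 0 y') with hc
      have hline : ∀ t : ℝ, e.symm (i.insertNth t y') = c + t • eV (n+1) i := by
        intro t
        apply PiLp.ext
        intro k
        have hcoord : ∀ (w : Fin (n+1) → ℝ) (j : Fin (n+1)), e.symm w j = w j := fun _ _ => rfl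
        have hrhs : (c + t • eV (n+1) i) k = c k + t * (if k = i then 1 else 0) := by
          rw [PiLp.add_apply, PiLp.smul_apply, eV_apply, smul_eq_mul]
        rw [hrhs, hcoord, hc, hcoord]
        refine Fin.succAboveCases i ?_ ?_ k
        · simp [Fin.insertNth_apply_same]
        · intro j
          rw [Fin.insertNth_apply_succAbove, Fin.insertNth_apply_succAbove,
            if_neg (Fin.succAbove_ne i j), mul_zero, add_zero]
      have hgt : ∀ t : ℝ, g (t, y') = φ (c + t • eV (n+1) i) := by
        intro t
        have : q.symm (t, y') = i.insertNth t y' := rfl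
        rw [hgdef]
        simp only [this, hψdef]
        rw [hline]
      have hderiv : ∀ t : ℝ, HasDerivAt (fun s => f (c + s • eV (n+1) i))
          (φ (c + t • eV (n+1) i)) t := by
        intro t
        have hl : HasDerivAt (fun s : ℝ => c + s • eV (n+1) i) (eV (n+1) i) t := by
          simpa using ((hasDerivAt_id t).smul_const (eV (n+1) i)).const_add c
        exact ((hf.differentiable one_ne_zero _).hasFDerivAt.comp_hasDerivAt t hl)
      have hcont : Continuous fun t : ℝ => φ (c + t • eV (n+1) i) :=
        hφc.comp (continuous_const.add (continuous_id.smul continuous_const))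
      calc ∫ t in Set.Ico (0:ℝ) 1, g (t, y')
          = ∫ t in Set.Ioc (0:ℝ) 1, g (t, y') := setIntegral_congr_set Ico_ae_eq_Ioc
        _ = ∫ t in (0:ℝ)..1, g (t, y') := (intervalIntegral.integral_of_le zero_le_one).symm
        _ = ∫ t in (0:ℝ)..1, φ (c + t • eV (n+1) i) := by
              congr 1; ext t; exact hgt t
        _ = f (c + (1:ℝ) • eV (n+1) i) - f (c + (0:ℝ) • eV (n+1) i) :=
              intervalIntegral.integral_eq_sub_of_hasDerivAt
                (fun t _ => hderiv t) (hcont.intervalIntegrable 0 1)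
        _ = 0 := by
              rw [one_smul, zero_smul, add_zero]
              have : c + eV (n+1) i = c + intVec (n+1) (fun j => if j = i then 1 else 0) := by
                rw [intVec_single]
              rw [this, hp (fun j => if j = i then 1 else 0) c, sub_self]
    · have : ∀ t : ℝ, T.indicator g (t, y') = 0 := by
        intro t
        apply Set.indicator_of_notMem
        intro hmem
        exact hy hmem.2
      simp [this]
  -- put everything together
  have step3 : ∫ z in T, g z ∂((volume : Measure ℝ).prod (volume : Measure (Fin n → ℝ))) = 0 := by
    rw [← integral_indicator hmess, integral_prod_symm _ hint]
    simp only [inner_zero, integral_zero]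
  rw [step1, step2]
  exact step3

/-! ### monotone smooth step functions -/

lemma expNegInvGlue_monotone : Monotone expNegInvGlue := by
  intro x y hxy
  rcases le_or_gt x 0 with hx | hx
  · rw [expNegInvGlue.zero_of_nonpos hx]; exact expNegInvGlue.nonneg y
  · have hy : 0 < y := hx.trans_le hxy
    unfold expNegInvGlue
    rw [if_neg (not_le.2 hx), if_neg (not_le.2 hy)]
    apply Real.exp_le_exp.2
    have : y⁻¹ ≤ x⁻¹ := by
      apply inv_anti₀ hx hxy
    linarith

lemma smoothTransition_monotone : Monotone Real.smoothTransition := by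
  intro x y hxy
  unfold Real.smoothTransition
  rw [div_le_div_iff₀ (Real.smoothTransition.pos_denom x) (Real.smoothTransition.pos_denom y)]
  have h1 : expNegInvGlue x ≤ expNegInvGlue y := expNegInvGlue_monotone hxy
  have h2 : expNegInvGlue (1 - y) ≤ expNegInvGlue (1 - x) :=
    expNegInvGlue_monotone (by linarith)
  nlinarith [expNegInvGlue.nonneg x, expNegInvGlue.nonneg y,
    expNegInvGlue.nonneg (1 - x), expNegInvGlue.nonneg (1 - y)]

/-- a smooth nonincreasing step: equal to `1` for `t ≤ 0`, to `0` for `t ≥ a` -/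
def stepFn (a t : ℝ) : ℝ := Real.smoothTransition ((a - t) / a)

lemma stepFn_contDiff (a : ℝ) {n : ℕ∞} : ContDiff ℝ n fun t => stepFn a t := by
  unfold stepFn
  exact Real.smoothTransition.contDiff.comp ((contDiff_const.sub contDiff_id).div_const a)

lemma stepFn_antitone {a : ℝ} (ha : 0 < a) : Antitone (stepFn a) := by
  intro s t hst
  unfold stepFn
  exact smoothTransition_monotone ((div_le_div_iff_of_pos_right ha).2 (by linarith))

lemma stepFn_one {a t : ℝ} (ha : 0 < a) (ht : t ≤ 0) : stepFn a t = 1 := by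
  unfold stepFn
  apply Real.smoothTransition.one_of_one_le
  rw [le_div_iff₀ ha]; linarith

lemma stepFn_zero {a t : ℝ} (ha : 0 < a) (ht : a ≤ t) : stepFn a t = 0 := by
  unfold stepFn
  apply Real.smoothTransition.zero_of_nonpos
  apply div_nonpos_of_nonpos_of_nonneg (by linarith) ha.le

lemma stepFn_nonneg (a t : ℝ) : 0 ≤ stepFn a t := Real.smoothTransition.nonneg _

lemma stepFn_le_one (a t : ℝ) : stepFn a t ≤ 1 := Real.smoothTransition.le_one _

lemma stepFn_deriv_nonpos {a : ℝ} (ha : 0 < a) (t : ℝ) : deriv (stepFn a) t ≤ 0 := by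
  have hdiff : DifferentiableAt ℝ (stepFn a) t :=
    ((stepFn_contDiff a (n := 1)).differentiable (by simp)) t
  have htd : Filter.Tendsto (slope (stepFn a) t) (nhdsWithin t (Set.Ioi t)) (nhds (deriv (stepFn a) t)) :=
    (hasDerivAt_iff_tendsto_slope.1 hdiff.hasDerivAt).mono_left
      (nhdsWithin_mono t fun u hu => ne_of_gt hu)
  apply le_of_tendsto htd
  filter_upwards [self_mem_nhdsWithin] with u hu
  have : stepFn a u ≤ stepFn a t := stepFn_antitone ha (le_of_lt hu)
  have hut : (0:ℝ) < u - t := by simpa [sub_pos] using hu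
  rw [slope_def_field]
  apply div_nonpos_of_nonpos_of_nonneg <;> [linarith; linarith]

/-! ### integrability helpers -/

lemma integrableOn_Qcube {f : RN N → ℝ} (hf : Continuous f) :
    IntegrableOn f (Qcube N) volume := by
  obtain ⟨M, hM⟩ : ∃ M, ∀ x ∈ closure (Qcube N), ‖f x‖ ≤ M :=
    (isBounded_Qcube.isCompact_closure).exists_bound_of_continuousOn hf.continuousOn
  apply Measure.integrableOn_of_bounded volume_Qcube_lt_top.ne hf.aestronglyMeasurable (M := M)
  filter_upwards [ae_restrict_mem measurableSet_Qcube] with x hx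
  exact hM x (subset_closure hx)

lemma integrableOn_subQ {f : RN N → ℝ} (hf : Continuous f) {s : Set (RN N)}
    (hs : s ⊆ Qcube N) : IntegrableOn f s volume :=
  (integrableOn_Qcube hf).mono_set hs

lemma continuous_divg {X : RN N → RN N} (hX : ContDiff ℝ 1 X) :
    Continuous (divg N X) := by
  apply continuous_finset_sum
  intro i _
  exact (continuous_coord i).comp
    ((ContinuousLinearMap.apply ℝ (RN N) (eV N i)).continuous.comp (hX.continuous_fderiv one_ne_zero))

lemma continuous_pairing {u : RN N → ℝ} {X : RN N → RN N}
    (hu : ContDiff ℝ 1 u) (hX : Continuous X) :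
    Continuous fun x => fderiv ℝ u x (X x) :=
  isBoundedBilinearMap_apply.continuous.comp ((hu.continuous_fderiv one_ne_zero).prodMk hX)

/-! ### the divergence theorem on the torus -/

lemma integral_divg_Qcube {Y : RN N → RN N} (hY : ContDiff ℝ 1 Y) (hp : PerFun N Y) :
    ∫ x in Qcube N, divg N Y x = 0 := by
  have hterm : ∀ i : Fin N, ∫ x in Qcube N, fderiv ℝ Y x (eV N i) i = 0 := by
    intro i
    have hYi : ContDiff ℝ 1 fun x => Y x i :=
      (EuclideanSpace.proj i : RN N →L[ℝ] ℝ).contDiff.comp hY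
    have hpi : PerFun N fun x => Y x i := fun z x => by
      show Y (x + intVec N z) i = Y x i
      rw [hp z x]
    have hfd : ∀ x : RN N, fderiv ℝ (fun y => Y y i) x (eV N i) = fderiv ℝ Y x (eV N i) i := by
      intro x
      have hco : (fun y => Y y i) = (⇑(EuclideanSpace.proj (𝕜 := ℝ) i) ∘ Y) := by
        funext y; rfl
      rw [hco, ((EuclideanSpace.proj (𝕜 := ℝ) i).hasFDerivAt.comp x
        ((hY.differentiable one_ne_zero) x).hasFDerivAt).fderiv]
      rfl
    have h := integral_fderiv_eV (fun x => Y x i) hYi hpi i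
    rw [← h]
    apply setIntegral_congr_fun measurableSet_Qcube
    intro x _
    exact (hfd x).symm
  unfold divg
  rw [integral_finset_sum]
  · exact Finset.sum_eq_zero fun i _ => hterm i
  · intro i _
    apply integrableOn_subQ ?_ (subset_refl _)
    exact (continuous_coord i).comp
      ((ContinuousLinearMap.apply ℝ (RN N) (eV N i)).continuous.comp (hY.continuous_fderiv one_ne_zero))

lemma divg_smul {u : RN N → ℝ} {X : RN N → RN N} (x : RN N)
    (hu : DifferentiableAt ℝ u x) (hX : DifferentiableAt ℝ X x) :
    divg N (fun y => u y • X y) x = u x * divg N X x + fderiv ℝ u x (X x) := by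
  unfold divg
  rw [(hu.hasFDerivAt.fun_smul hX.hasFDerivAt).fderiv]
  simp only [ContinuousLinearMap.add_apply, ContinuousLinearMap.coe_smul', Pi.smul_apply,
    ContinuousLinearMap.smulRight_apply, PiLp.add_apply, PiLp.smul_apply, smul_eq_mul]
  rw [Finset.sum_add_distrib, Finset.mul_sum]
  congr 1
  have hbasis : X x = ∑ i, X x i • eV N i := by
    have h := ((EuclideanSpace.basisFun (Fin N) ℝ).sum_repr (X x)).symm
    simpa [EuclideanSpace.basisFun_apply, EuclideanSpace.basisFun_repr, eV] using h
  conv_rhs => rw [hbasis]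
  rw [map_sum]
  apply Finset.sum_congr rfl
  intro i _
  rw [(fderiv ℝ u x).map_smul, smul_eq_mul, mul_comm]

lemma torus_ibp {u : RN N → ℝ} {X : RN N → RN N}
    (hu : ContDiff ℝ 1 u) (hX : ContDiff ℝ 1 X) (hpu : PerFun N u) (hpX : PerFun N X) :
    ∫ x in Qcube N, u x * divg N X x = - ∫ x in Qcube N, fderiv ℝ u x (X x) := by
  have hY : ContDiff ℝ 1 fun y => u y • X y := hu.smul hX
  have hpY : PerFun N fun y => u y • X y := fun z x => by
    simp only [hpu z x, hpX z x]
  have h0 := integral_divg_Qcube hY hpY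
  have hsplit : ∀ x ∈ Qcube N, divg N (fun y => u y • X y) x
      = u x * divg N X x + fderiv ℝ u x (X x) := fun x _ =>
    divg_smul x ((hu.differentiable one_ne_zero) x) ((hX.differentiable one_ne_zero) x)
  rw [setIntegral_congr_fun measurableSet_Qcube hsplit] at h0
  rw [integral_add (f := fun x => u x * divg N X x) (integrableOn_subQ (hu.continuous.mul (continuous_divg hX)) (subset_refl _))
    (integrableOn_subQ (continuous_pairing hu hX.continuous) (subset_refl _))] at h0
  linarith

/-! ### basics about the signed distance -/

lemma intVec_apply (z : Fin N → ℤ) (i : Fin N) : intVec N z i = (z i : ℝ) := by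
  have : ∀ j : Fin N, ((z j : ℝ) • eV N j) i = if i = j then (z j : ℝ) else 0 := by
    intro j
    rw [PiLp.smul_apply, eV_apply, smul_eq_mul]
    by_cases h : i = j <;> simp [h]
  calc intVec N z i
      = (EuclideanSpace.proj (𝕜 := ℝ) i) (∑ j, (z j : ℝ) • eV N j) := rfl
    _ = ∑ j, (EuclideanSpace.proj (𝕜 := ℝ) i) ((z j : ℝ) • eV N j) := map_sum _ _ _
    _ = ∑ j, if i = j then (z j : ℝ) else 0 := Finset.sum_congr rfl fun j _ => this j
    _ = (z i : ℝ) := by rw [Finset.sum_ite_eq]; simp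

lemma intVec_neg (z : Fin N → ℤ) : intVec N (fun i => -(z i)) = -intVec N z := by
  unfold intVec
  rw [← Finset.sum_neg_distrib]
  apply Finset.sum_congr rfl
  intro j _
  push_cast
  rw [neg_smul]

lemma translate_isometry (v : RN N) : Isometry fun x : RN N => x + v :=
  Isometry.of_dist_eq fun x y => dist_add_right x y v

lemma frontier_perSet {E : Set (RN N)} (hper : PerSet N E) (z : Fin N → ℤ) :
    (fun x => x + intVec N z) ⁻¹' frontier E = frontier E := by
  have h := (Homeomorph.addRight (intVec N z)).preimage_frontier E
  have h2 : (⇑(Homeomorph.addRight (intVec N z)) ⁻¹' E) = E := hper z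
  calc (fun x => x + intVec N z) ⁻¹' frontier E
      = ⇑(Homeomorph.addRight (intVec N z)) ⁻¹' frontier E := rfl
    _ = frontier (⇑(Homeomorph.addRight (intVec N z)) ⁻¹' E) := h
    _ = frontier E := by rw [h2]

lemma mem_frontier_translate {E : Set (RN N)} (hper : PerSet N E) (z : Fin N → ℤ) (x : RN N) :
    x + intVec N z ∈ frontier E ↔ x ∈ frontier E := by
  constructor
  · intro h
    have := frontier_perSet hper z
    rw [← this]; exact h
  · intro h
    have := (frontier_perSet hper z).symm ▸ h
    exact this

lemma image_frontier_translate {E : Set (RN N)} (hper : PerSet N E) (z : Fin N → ℤ) :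
    (fun x => x + intVec N z) '' frontier E = frontier E := by
  apply Set.eq_of_subset_of_subset
  · rintro y ⟨w, hw, rfl⟩
    exact (mem_frontier_translate hper z w).2 hw
  · intro y hy
    refine ⟨y - intVec N z, ?_, sub_add_cancel y (intVec N z)⟩
    have hyy : (y - intVec N z) + intVec N z = y := sub_add_cancel y (intVec N z)
    rw [← hyy] at hy
    exact (mem_frontier_translate hper z _).1 hy

lemma mem_translate {E : Set (RN N)} (hper : PerSet N E) (z : Fin N → ℤ) (x : RN N) :
    x + intVec N z ∈ E ↔ x ∈ E := by
  conv_rhs => rw [← hper z]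
  rfl

lemma sd_periodic {E : Set (RN N)} (hper : PerSet N E) : PerFun N (sd N E) := by
  intro z x
  unfold sd
  have hd : Metric.infDist (x + intVec N z) (frontier E) = Metric.infDist x (frontier E) := by
    conv_lhs => rw [← image_frontier_translate hper z]
    exact Metric.infDist_image (translate_isometry (intVec N z))
  by_cases hx : x ∈ E
  · rw [if_pos ((mem_translate hper z x).2 hx), if_pos hx, hd]
  · rw [if_neg (fun h => hx ((mem_translate hper z x).1 h)), if_neg hx, hd]

lemma abs_sd {E : Set (RN N)} (x : RN N) : |sd N E x| = Metric.infDist x (frontier E) := by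
  unfold sd
  split
  · rw [abs_of_nonpos (by simp [Metric.infDist_nonneg])]; simp
  · exact abs_of_nonneg Metric.infDist_nonneg

lemma exists_frontier_segment {E : Set (RN N)} {x y : RN N} (hx : x ∈ E) (hy : y ∉ E) :
    ∃ z ∈ segment ℝ x y, z ∈ frontier E := by
  by_cases hxf : x ∈ frontier E
  · exact ⟨x, left_mem_segment ℝ x y, hxf⟩
  by_cases hyf : y ∈ frontier E
  · exact ⟨y, right_mem_segment ℝ x y, hyf⟩
  by_contra h
  push_neg at h
  have hxi : x ∈ interior E := by
    rcases (closure_eq_interior_union_frontier E ▸ subset_closure hx) with h' | h'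
    · exact h'
    · exact absurd h' hxf
  have hyi : y ∈ interior Eᶜ := by
    have hyc : y ∈ closure Eᶜ := subset_closure hy
    rcases (closure_eq_interior_union_frontier Eᶜ ▸ hyc) with h' | h'
    · exact h'
    · rw [frontier_compl] at h'; exact absurd h' hyf
  have hsub : segment ℝ x y ⊆ interior E ∪ interior Eᶜ := by
    intro z hz
    by_cases hzc : z ∈ closure E
    · rcases (closure_eq_interior_union_frontier E ▸ hzc) with h' | h'
      · exact Or.inl h'
      · exact absurd h' (h z hz)
    · right
      rw [interior_compl]
      exact hzc
  obtain ⟨z, hzseg, hzmem⟩ := ((convex_segment x y).isPreconnected) _ _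
    isOpen_interior isOpen_interior hsub ⟨x, left_mem_segment ℝ x y, hxi⟩
    ⟨y, right_mem_segment ℝ x y, hyi⟩
  exact (interior_subset (s := Eᶜ) hzmem.2) (interior_subset hzmem.1)

lemma sd_lipschitz {E : Set (RN N)} : LipschitzWith 1 (sd N E) := by
  have key : ∀ x y : RN N, x ∈ E → y ∉ E → dist (sd N E x) (sd N E y) ≤ dist x y := by
    intro x y hx hy
    obtain ⟨z, hzseg, hzf⟩ := exists_frontier_segment hx hy
    have ha : Metric.infDist x (frontier E) ≤ dist x z := Metric.infDist_le_dist_of_mem hzf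
    have hb : Metric.infDist y (frontier E) ≤ dist y z := Metric.infDist_le_dist_of_mem hzf
    have hsum : dist x z + dist z y = dist x y := dist_add_dist_of_mem_segment hzseg
    have hxv : sd N E x = -Metric.infDist x (frontier E) := if_pos hx
    have hyv : sd N E y = Metric.infDist y (frontier E) := if_neg hy
    rw [hxv, hyv, Real.dist_eq]
    have h1 : (0:ℝ) ≤ Metric.infDist x (frontier E) := Metric.infDist_nonneg
    have h2 : (0:ℝ) ≤ Metric.infDist y (frontier E) := Metric.infDist_nonneg
    rw [abs_of_nonpos (by linarith)]
    have : dist y z = dist z y := dist_comm y z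
    linarith
  apply LipschitzWith.of_dist_le_mul
  intro x y
  rw [NNReal.coe_one, one_mul]
  by_cases hx : x ∈ E <;> by_cases hy : y ∈ E
  · have hxv : sd N E x = -Metric.infDist x (frontier E) := if_pos hx
    have hyv : sd N E y = -Metric.infDist y (frontier E) := if_pos hy
    rw [hxv, hyv, Real.dist_eq, neg_sub_neg, ← Real.dist_eq, Real.dist_eq, abs_sub_comm,
      ← Real.dist_eq]
    exact (Metric.lipschitz_infDist_pt (frontier E)).dist_le_mul x y |>.trans (by rw [NNReal.coe_one, one_mul])
  · exact key x y hx hy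
  · rw [dist_comm (sd N E x), dist_comm x y]
    exact key y x hy hx
  · have hxv : sd N E x = Metric.infDist x (frontier E) := if_neg hx
    have hyv : sd N E y = Metric.infDist y (frontier E) := if_neg hy
    rw [hxv, hyv]
    exact (Metric.lipschitz_infDist_pt (frontier E)).dist_le_mul x y |>.trans (by rw [NNReal.coe_one, one_mul])

lemma sd_continuous {E : Set (RN N)} : Continuous (sd N E) := sd_lipschitz.continuous

lemma sd_nonpos_iff {E : Set (RN N)} (hfr : (frontier E).Nonempty) (x : RN N) :
    sd N E x ≤ 0 ↔ x ∈ E ∪ frontier E := by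
  unfold sd
  by_cases hx : x ∈ E
  · simp only [if_pos hx]
    constructor
    · intro _; exact Or.inl hx
    · intro _; simp [Metric.infDist_nonneg]
  · simp only [if_neg hx]
    constructor
    · intro h
      have h0 : Metric.infDist x (frontier E) = 0 := le_antisymm h Metric.infDist_nonneg
      exact Or.inr ((isClosed_frontier.mem_iff_infDist_zero hfr).2 h0)
    · rintro (h | h)
      · exact absurd h hx
      · rw [Metric.infDist_zero_of_mem h]

/-! ### translation equivariance of derivatives; gradient helpers -/

lemma fderiv_inner_gradient (f : RN N → ℝ) (x v : RN N) :
    ⟪gradient f x, v⟫ = fderiv ℝ f x v :=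
  InnerProductSpace.toDual_symm_apply

lemma norm_gradient_eq (f : RN N → ℝ) (x : RN N) :
    ‖gradient f x‖ = ‖fderiv ℝ f x‖ :=
  LinearIsometryEquiv.norm_map _ _

lemma fderiv_translate (f : RN N → ℝ) (v x : RN N) :
    fderiv ℝ (fun y => f (y + v)) x = fderiv ℝ f (x + v) := by
  by_cases hd : DifferentiableAt ℝ f (x + v)
  · have h1 : HasFDerivAt (fun y : RN N => y + v) (ContinuousLinearMap.id ℝ (RN N)) x :=
      (hasFDerivAt_id x).add_const v
    have h2 := hd.hasFDerivAt.comp x h1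
    rw [ContinuousLinearMap.comp_id] at h2
    exact h2.fderiv
  · have hd2 : ¬ DifferentiableAt ℝ (fun y => f (y + v)) x := by
      intro hcon
      apply hd
      have h3 : DifferentiableAt ℝ (fun w : RN N => w - v) (x + v) :=
        (differentiable_id.sub_const v) _
      have hcon' : DifferentiableAt ℝ (fun y => f (y + v)) (x + v - v) := by
        rw [add_sub_cancel_right]; exact hcon
      have h4 := hcon'.comp (x + v) h3
      have : (fun w : RN N => f (w - v + v)) = f := by
        funext w; rw [sub_add_cancel]
      rw [show ((fun y => f (y + v)) ∘ fun w : RN N => w - v) = f from by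
        funext w; show f (w - v + v) = f w; rw [sub_add_cancel]] at h4
      exact h4
    rw [fderiv_zero_of_not_differentiableAt hd, fderiv_zero_of_not_differentiableAt hd2]

lemma fderiv_periodic {f : RN N → ℝ} (hp : PerFun N f) (z : Fin N → ℤ) (x : RN N) :
    fderiv ℝ f (x + intVec N z) = fderiv ℝ f x := by
  rw [← fderiv_translate f (intVec N z) x]
  congr 1
  funext y
  exact hp z y

lemma gradient_periodic {f : RN N → ℝ} (hp : PerFun N f) (z : Fin N → ℤ) (x : RN N) :
    gradient f (x + intVec N z) = gradient f x := by
  show (InnerProductSpace.toDual ℝ _).symm (fderiv ℝ f (x + intVec N z))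
      = (InnerProductSpace.toDual ℝ _).symm (fderiv ℝ f x)
  rw [fderiv_periodic hp z x]

lemma contDiffAt_periodic {f : RN N → ℝ} (hp : PerFun N f) {z : Fin N → ℤ} {x : RN N}
    {n : WithTop ℕ∞} (h : ContDiffAt ℝ n f (x + intVec N z)) : ContDiffAt ℝ n f x := by
  have hcomp : ContDiffAt ℝ n (fun w => f (w + intVec N z)) x :=
    h.comp x ((contDiff_id.add contDiff_const).contDiffAt)
  have : (fun w => f (w + intVec N z)) = f := funext fun w => hp z w
  rwa [this] at hcomp

lemma isBounded_IccCube :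
    Bornology.IsBounded {x : RN N | ∀ i, x i ∈ Set.Icc (0:ℝ) 1} := by
  have h : {x : RN N | ∀ i, x i ∈ Set.Icc (0:ℝ) 1} ⊆ Metric.closedBall 0 (Real.sqrt N) := by
    intro x hx
    simp only [Metric.mem_closedBall, dist_zero_right]
    rw [EuclideanSpace.norm_eq]
    apply Real.sqrt_le_sqrt
    calc ∑ i, ‖x i‖ ^ 2 ≤ ∑ _i : Fin N, 1 := by
          apply Finset.sum_le_sum
          intro i _
          have h0 := (hx i).1; have h1 := (hx i).2
          have : |x i| ≤ 1 := by rw [abs_le]; constructor <;> nlinarith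
          calc ‖x i‖ ^ 2 = |x i| ^ 2 := by rw [Real.norm_eq_abs]
            _ ≤ 1 ^ 2 := by nlinarith [abs_nonneg (x i)]
            _ = 1 := one_pow 2
      _ = (N : ℝ) := by simp
  exact (Metric.isBounded_closedBall).subset h

lemma exists_translate_IccCube (x : RN N) :
    ∃ z : Fin N → ℤ, ∀ i, (x + intVec N z) i ∈ Set.Icc (0:ℝ) 1 := by
  refine ⟨fun i => -⌊x i⌋, fun i => ?_⟩
  have hco : (x + intVec N (fun i => -⌊x i⌋)) i = x i - ⌊x i⌋ := by
    rw [PiLp.add_apply, intVec_apply]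
    push_cast
    ring
  rw [hco]
  constructor
  · linarith [Int.floor_le (x i)]
  · linarith [Int.lt_floor_add_one (x i)]

/-! ### the tubular neighbourhood lemma -/

lemma tube_lemma {E : Set (RN N)} (hper : PerSet N E) (hsm : SmoothBdry N 2 E)
    (hfr : (frontier E).Nonempty) :
    ∃ δ : ℝ, 0 < δ ∧ ∀ x : RN N, Metric.infDist x (frontier E) < δ →
      ContDiffAt ℝ 2 (sd N E) x ∧ 1/2 ≤ ‖gradient (sd N E) x‖ := by
  obtain ⟨U, hUopen, hUfr, hUsmooth, hUgrad⟩ := hsm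
  -- local neighbourhoods of boundary points
  have hloc : ∀ y, y ∈ frontier E → ∃ r, 0 < r ∧ ∀ x ∈ Metric.ball y (2*r),
      ContDiffAt ℝ 2 (sd N E) x ∧ 1/2 ≤ ‖gradient (sd N E) x‖ := by
    intro y hy
    have hyU : y ∈ U := hUfr hy
    have hCD : ∀ x ∈ U, ContDiffAt ℝ 2 (sd N E) x := fun x hx =>
      hUsmooth.contDiffAt (hUopen.mem_nhds hx)
    have hfc : ContinuousOn (fun x => gradient (sd N E) x) U := by
      have h1 : ContinuousOn (fderiv ℝ (sd N E)) U :=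
        hUsmooth.continuousOn_fderiv_of_isOpen hUopen (by exact_mod_cast one_le_two)
      exact (InnerProductSpace.toDual ℝ (RN N)).symm.continuous.comp_continuousOn h1
    have hcAt : ContinuousAt (fun x => ‖gradient (sd N E) x‖) y :=
      ((hfc.continuousAt (hUopen.mem_nhds hyU)).norm)
    have hval : ‖gradient (sd N E) y‖ = 1 := hUgrad y hy
    have hev : {x : RN N | 1/2 < ‖gradient (sd N E) x‖} ∈ nhds y := by
      apply hcAt.preimage_mem_nhds
      apply isOpen_Ioi.mem_nhds
      rw [hval]; norm_num
    have hUy : U ∈ nhds y := hUopen.mem_nhds hyU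
    obtain ⟨ε, hε, hball⟩ := Metric.mem_nhds_iff.1 (Filter.inter_mem hev hUy)
    refine ⟨ε/4, by linarith, fun x hx => ?_⟩
    have hx' : x ∈ Metric.ball y ε := by
      rw [Metric.mem_ball] at hx ⊢
      linarith [hx]
    obtain ⟨hgt, hU⟩ := hball hx'
    exact ⟨hCD x hU, le_of_lt hgt⟩
  choose! r hrpos hrball using hloc
  -- the compact core of the boundary
  set K0 := frontier E ∩ {x : RN N | ∀ i, x i ∈ Set.Icc (0:ℝ) 1} with hK0
  have hK0closed : IsClosed K0 := by
    apply isClosed_frontier.inter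
    have : {x : RN N | ∀ i, x i ∈ Set.Icc (0:ℝ) 1}
        = ⋂ i, (fun x : RN N => x i) ⁻¹' Set.Icc (0:ℝ) 1 := by
      ext x; simp
    rw [this]
    exact isClosed_iInter fun i => isClosed_Icc.preimage (continuous_coord i)
  have hK0comp : IsCompact K0 :=
    ((isBounded_IccCube.subset Set.inter_subset_right).isCompact_closure).of_isClosed_subset
      hK0closed subset_closure
  -- K0 is nonempty
  obtain ⟨y0, hy0⟩ := id hfr
  obtain ⟨z0, hz0⟩ := exists_translate_IccCube y0
  have hK0ne : K0.Nonempty :=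
    ⟨y0 + intVec N z0, (mem_frontier_translate hper z0 y0).2 hy0, hz0⟩
  -- finite subcover
  have hcover : K0 ⊆ ⋃ p : {y : RN N // y ∈ frontier E}, Metric.ball p.1 (r p.1) := by
    intro w hw
    exact Set.mem_iUnion.2 ⟨⟨w, hw.1⟩, Metric.mem_ball_self (hrpos w hw.1)⟩
  obtain ⟨t, ht⟩ := hK0comp.elim_finite_subcover _ (fun p => Metric.isOpen_ball) hcover
  have htne : t.Nonempty := by
    obtain ⟨w, hw⟩ := hK0ne
    obtain ⟨p, hpt, _⟩ := Set.mem_iUnion₂.1 (ht hw)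
    exact ⟨p, hpt⟩
  set δ := t.inf' htne fun p => r p.1 with hδ
  have hδpos : 0 < δ := by
    rw [hδ, Finset.lt_inf'_iff]
    exact fun p hp => hrpos p.1 p.2
  refine ⟨δ, hδpos, fun x hx => ?_⟩
  obtain ⟨y, hyfr, hdxy⟩ := (Metric.infDist_lt_iff hfr).1 hx
  obtain ⟨z, hz⟩ := exists_translate_IccCube y
  set v := intVec N z with hv
  have hyK0 : y + v ∈ K0 := ⟨(mem_frontier_translate hper z y).2 hyfr, hz⟩
  obtain ⟨p, hpt, hyp⟩ := Set.mem_iUnion₂.1 (ht hyK0)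
  have hδle : δ ≤ r p.1 := Finset.inf'_le _ hpt
  have hxball : x + v ∈ Metric.ball p.1 (2 * r p.1) := by
    rw [Metric.mem_ball] at hyp ⊢
    have hd1 : dist (x + v) (y + v) = dist x y := dist_add_right x y v
    calc dist (x + v) p.1 ≤ dist (x + v) (y + v) + dist (y + v) p.1 := dist_triangle _ _ _
      _ < δ + r p.1 := by rw [hd1]; exact add_lt_add_of_lt_of_le hdxy (le_of_lt hyp) |>.trans_le (le_refl _)
      _ ≤ 2 * r p.1 := by linarith
  obtain ⟨hCD, hgr⟩ := hrball p.1 p.2 (x + v) hxball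
  refine ⟨contDiffAt_periodic (sd_periodic hper) hCD, ?_⟩
  rw [← gradient_periodic (sd_periodic hper) z x]
  exact hgr

/-! ### level sets with nonvanishing partial derivative are null -/

lemma line_decomp {n : ℕ} (i : Fin (n+1)) (y' : Fin n → ℝ) (t : ℝ) :
    ((MeasurableEquiv.toLp 2 (Fin (n+1) → ℝ)).symm).symm (i.insertNth t y')
      = ((MeasurableEquiv.toLp 2 (Fin (n+1) → ℝ)).symm).symm (i.insertNth 0 y')
        + t • eV (n+1) i := by
  apply PiLp.ext
  intro k
  have hcoord : ∀ (w : Fin (n+1) → ℝ) (j : Fin (n+1)),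
      ((MeasurableEquiv.toLp 2 (Fin (n+1) → ℝ)).symm).symm w j = w j := fun _ _ => rfl
  have hrhs : (((MeasurableEquiv.toLp 2 (Fin (n+1) → ℝ)).symm).symm (i.insertNth 0 y')
      + t • eV (n+1) i) k
      = ((MeasurableEquiv.toLp 2 (Fin (n+1) → ℝ)).symm).symm (i.insertNth 0 y') k
        + t * (if k = i then 1 else 0) := by
    rw [PiLp.add_apply, PiLp.smul_apply, eV_apply, smul_eq_mul]
  rw [hrhs, hcoord, hcoord]
  refine Fin.succAboveCases i ?_ ?_ k
  · simp [Fin.insertNth_apply_same]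
  · intro j
    rw [Fin.insertNth_apply_succAbove, Fin.insertNth_apply_succAbove,
      if_neg (Fin.succAbove_ne i j), mul_zero, add_zero]

lemma null_of_deriv_pos (i : Fin N) {c' : ℝ} (hc' : 0 < c') (y : RN N) (ρ : ℝ)
    {g : RN N → ℝ} (hg : Continuous g)
    (hdiff : ∀ x ∈ Metric.ball y ρ, DifferentiableAt ℝ g x)
    (hpos : ∀ x ∈ Metric.ball y ρ, c' ≤ fderiv ℝ g x (eV N i)) :
    volume {x ∈ Metric.ball y ρ | g x = 0} = 0 := by
  obtain ⟨n, rfl⟩ : ∃ n, N = n + 1 := ⟨N - 1, (Nat.succ_pred_eq_of_pos i.pos).symm⟩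
  set A := {x ∈ Metric.ball y ρ | g x = 0} with hA
  have hAmeas : MeasurableSet A := by
    have : A = Metric.ball y ρ ∩ g ⁻¹' {0} := by
      ext x; simp [hA]
    rw [this]
    exact Metric.isOpen_ball.measurableSet.inter (hg.measurable (measurableSet_singleton 0))
  set e := (MeasurableEquiv.toLp 2 (Fin (n+1) → ℝ)).symm with he
  have mp : MeasurePreserving e.symm (volume : Measure (Fin (n+1) → ℝ)) volume :=
    (EuclideanSpace.volume_preserving_symm_measurableEquiv_toLp (Fin (n+1))).symm e
  have h1 : volume A = volume (e.symm ⁻¹' A) := (mp.measure_preimage hAmeas.nullMeasurableSet).symm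
  set q := MeasurableEquiv.piFinSuccAbove (fun _ : Fin (n+1) => ℝ) i with hq
  have mp2 : MeasurePreserving q (volume : Measure (Fin (n+1) → ℝ))
      ((volume : Measure ℝ).prod (volume : Measure (Fin n → ℝ))) := by
    rw [volume_pi, volume_pi]
    exact measurePreserving_piFinSuccAbove (fun _ => (volume : Measure ℝ)) i
  set T := q.symm ⁻¹' (e.symm ⁻¹' A) with hT
  have hTmeas : MeasurableSet T := q.symm.measurable (e.symm.measurable hAmeas)
  have h2 : volume (e.symm ⁻¹' A) = ((volume : Measure ℝ).prod (volume : Measure (Fin n → ℝ))) T := by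
    rw [← mp2.measure_preimage hTmeas.nullMeasurableSet]
    congr 1
    rw [hT, ← Set.preimage_comp]
    have : (q.symm ∘ q) = id := by
      funext w; exact q.symm_apply_apply w
    rw [this, Set.preimage_id]
  rw [h1, h2, Measure.prod_apply_symm hTmeas]
  have hslice : ∀ y' : Fin n → ℝ, ((fun t => (t, y')) ⁻¹' T).Subsingleton := by
    intro y'
    set c : RN (n+1) := e.symm (i.insertNth 0 y') with hc
    have hmem : ∀ t : ℝ, (t ∈ (fun t => (t, y')) ⁻¹' T)
        ↔ (c + t • eV (n+1) i ∈ Metric.ball y ρ ∧ g (c + t • eV (n+1) i) = 0) := by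
      intro t
      have : q.symm (t, y') = i.insertNth t y' := rfl
      simp only [Set.mem_preimage, hT, this, hA, Set.mem_setOf_eq, hc, he]
      rw [line_decomp i y' t]
    set I := {t : ℝ | c + t • eV (n+1) i ∈ Metric.ball y ρ} with hI
    have hIconv : Convex ℝ I := by
      intro t₁ ht₁ t₂ ht₂ a b ha hb hab
      have : c + (a * t₁ + b * t₂) • eV (n+1) i
          = a • (c + t₁ • eV (n+1) i) + b • (c + t₂ • eV (n+1) i) := by
        have h1 : a • (c + t₁ • eV (n+1) i) + b • (c + t₂ • eV (n+1) i)
            = (a + b) • c + (a * t₁ + b * t₂) • eV (n+1) i := by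
          rw [smul_add, smul_add, smul_smul, smul_smul, add_smul, add_smul]
          abel
        rw [h1, hab, one_smul]
      show c + (a * t₁ + b * t₂) • eV (n+1) i ∈ Metric.ball y ρ
      rw [this]
      exact (convex_ball y ρ) ht₁ ht₂ ha hb hab
    have hline : ∀ t : ℝ, HasDerivAt (fun s => g (c + s • eV (n+1) i))
        (fderiv ℝ g (c + t • eV (n+1) i) (eV (n+1) i)) t → True := fun _ _ => trivial
    have hsm : StrictMonoOn (fun t => g (c + t • eV (n+1) i)) I := by
      apply strictMonoOn_of_deriv_pos hIconv
      · exact (hg.comp (continuous_const.add (continuous_id.smul continuous_const))).continuousOn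
      · intro t ht
        have htI : t ∈ I := interior_subset ht
        have hd : HasDerivAt (fun s => g (c + s • eV (n+1) i))
            (fderiv ℝ g (c + t • eV (n+1) i) (eV (n+1) i)) t := by
          have hl : HasDerivAt (fun s : ℝ => c + s • eV (n+1) i) (eV (n+1) i) t := by
            simpa using ((hasDerivAt_id t).smul_const (eV (n+1) i)).const_add c
          exact ((hdiff _ htI).hasFDerivAt.comp_hasDerivAt t hl)
        rw [hd.deriv]
        exact lt_of_lt_of_le hc' (hpos _ htI)
    intro t₁ ht₁ t₂ ht₂
    have h₁ := (hmem t₁).1 ht₁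
    have h₂ := (hmem t₂).1 ht₂
    exact hsm.injOn h₁.1 h₂.1 (by rw [h₁.2, h₂.2])
  have : ∀ y' : Fin n → ℝ, (volume : Measure ℝ) ((fun t => (t, y')) ⁻¹' T) = 0 :=
    fun y' => (hslice y').measure_zero volume
  rw [lintegral_congr this, lintegral_zero]

/-! ### the boundary of a C² set is Lebesgue-null -/

lemma sd_frontier_eq_zero {E : Set (RN N)} {y : RN N} (hy : y ∈ frontier E) :
    sd N E y = 0 := by
  have h := abs_sd (E := E) y
  rw [Metric.infDist_zero_of_mem hy] at h
  exact abs_eq_zero.1 h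

lemma frontier_null {E : Set (RN N)} (hper : PerSet N E) (hsm : SmoothBdry N 2 E) :
    volume (frontier E) = 0 := by
  rcases (frontier E).eq_empty_or_nonempty with hfr | hfr
  · rw [hfr]; exact measure_empty
  obtain ⟨δ, hδ, htube⟩ := tube_lemma hper hsm hfr
  rcases Nat.eq_zero_or_pos N with hN | hN
  · exfalso
    obtain ⟨y, hy⟩ := id hfr
    have h := (htube y (by rw [Metric.infDist_zero_of_mem hy]; exact hδ)).2
    subst hN
    haveI : Subsingleton (RN 0) := ⟨fun a b => PiLp.ext fun j => Fin.elim0 j⟩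
    rw [Subsingleton.elim (gradient (sd 0 E) y) 0, norm_zero] at h
    linarith
  have hOopen : IsOpen {x : RN N | Metric.infDist x (frontier E) < δ} :=
    isOpen_lt (Metric.continuous_infDist_pt (frontier E)) continuous_const
  have hdiffO : ∀ x ∈ {x : RN N | Metric.infDist x (frontier E) < δ},
      DifferentiableAt ℝ (sd N E) x := fun x hx =>
    ((htube x hx).1).differentiableAt (by simp)
  have hloc : ∀ y ∈ frontier E,
      ∃ ρ, 0 < ρ ∧ volume (frontier E ∩ Metric.ball y ρ) = 0 := by
    intro y hy
    have hyO : y ∈ {x : RN N | Metric.infDist x (frontier E) < δ} := by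
      show Metric.infDist y (frontier E) < δ
      rw [Metric.infDist_zero_of_mem hy]; exact hδ
    obtain ⟨hCD, hgr⟩ := htube y hyO
    -- choose a coordinate with a large partial derivative
    set G := gradient (sd N E) y with hG
    have hnormsq : ∑ j, (G j)^2 = ‖G‖^2 := by
      rw [EuclideanSpace.norm_eq, Real.sq_sqrt (Finset.sum_nonneg fun j _ => sq_nonneg _)]
      apply Finset.sum_congr rfl
      intro j _
      rw [Real.norm_eq_abs, sq_abs]
    have hex : ∃ j, G j ≠ 0 := by
      by_contra hcon
      push_neg at hcon
      have : ‖G‖^2 = 0 := by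
        rw [← hnormsq]
        exact Finset.sum_eq_zero fun j _ => by rw [hcon j]; ring
      have h14 : (1/2 : ℝ)*(1/2) ≤ ‖G‖^2 := by
        rw [sq]
        exact mul_le_mul hgr hgr (by norm_num) (norm_nonneg G)
      rw [this] at h14
      norm_num at h14
    obtain ⟨j, hj⟩ := hex
    set a := fderiv ℝ (sd N E) y (eV N j) with ha
    have haG : a = G j := by
      rw [ha, ← fderiv_inner_gradient (sd N E) y (eV N j), hG]
      rw [show eV N j = EuclideanSpace.single j (1:ℝ) from rfl]
      rw [EuclideanSpace.inner_single_right]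
      simp
    have ha0 : a ≠ 0 := by rw [haG]; exact hj
    -- a neighbourhood where the partial derivative stays near `a`
    obtain ⟨u, huy, hucd⟩ := hCD.contDiffOn (m := 2) le_rfl (by simp)
    have hV'open : IsOpen (interior u) := isOpen_interior
    have hyV' : y ∈ interior u := mem_interior_iff_mem_nhds.2 huy
    have hfdc : ContinuousOn (fun x => fderiv ℝ (sd N E) x (eV N j)) (interior u) := by
      have h1 : ContinuousOn (fderiv ℝ (sd N E)) (interior u) :=
        (hucd.mono interior_subset).continuousOn_fderiv_of_isOpen hV'open
          (by exact_mod_cast one_le_two)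
      exact (ContinuousLinearMap.apply ℝ ℝ (eV N j)).continuous.comp_continuousOn h1
    have hWnhds : {x : RN N | |fderiv ℝ (sd N E) x (eV N j) - a| < |a|/2} ∈ nhds y := by
      have hca : ContinuousAt (fun x => fderiv ℝ (sd N E) x (eV N j)) y :=
        hfdc.continuousAt (hV'open.mem_nhds hyV')
      have : {v : ℝ | |v - a| < |a|/2} ∈ nhds a := by
        have h2 : {v : ℝ | |v - a| < |a|/2} = Metric.ball a (|a|/2) := by
          ext v; rw [Metric.mem_ball, Real.dist_eq]; rfl
        rw [h2]
        exact Metric.ball_mem_nhds a (by positivity)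
      exact hca.preimage_mem_nhds this
    obtain ⟨ρ, hρ, hball⟩ := Metric.mem_nhds_iff.1
      (Filter.inter_mem hWnhds (hOopen.mem_nhds hyO))
    refine ⟨ρ, hρ, ?_⟩
    have hsub : frontier E ∩ Metric.ball y ρ ⊆ {x ∈ Metric.ball y ρ | sd N E x = 0} :=
      fun x hx => ⟨hx.2, sd_frontier_eq_zero hx.1⟩
    apply measure_mono_null hsub
    rcases lt_or_gt_of_ne ha0 with hneg | hpos
    · -- a < 0 : apply the lemma to -sd
      have hset : {x ∈ Metric.ball y ρ | sd N E x = 0}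
          = {x ∈ Metric.ball y ρ | -(sd N E x) = 0} := by
        ext x; simp [neg_eq_zero]
      rw [hset]
      apply null_of_deriv_pos j (c' := |a|/2) (by positivity) y ρ sd_continuous.neg
      · intro x hx
        exact ((hdiffO x (hball hx).2)).neg
      · intro x hx
        obtain ⟨hW, hO⟩ := hball hx
        have hder : fderiv ℝ (-(sd N E)) x = -(fderiv ℝ (sd N E) x) := fderiv_neg
        rw [hder]
        simp only [ContinuousLinearMap.neg_apply]
        have habs : |fderiv ℝ (sd N E) x (eV N j) - a| < |a|/2 := hW
        rw [abs_lt] at habs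
        have : |a| = -a := abs_of_neg hneg
        linarith [habs.2]
    · apply null_of_deriv_pos j (c' := |a|/2) (by positivity) y ρ sd_continuous
      · intro x hx
        exact hdiffO x (hball hx).2
      · intro x hx
        obtain ⟨hW, hO⟩ := hball hx
        have habs : |fderiv ℝ (sd N E) x (eV N j) - a| < |a|/2 := hW
        rw [abs_lt] at habs
        have : |a| = a := abs_of_pos hpos
        linarith [habs.1]
  choose! ρ hρpos hρnull using hloc
  have hk : ∀ k : ℕ, volume (frontier E ∩ Metric.closedBall (0 : RN N) k) = 0 := by
    intro k
    set K := frontier E ∩ Metric.closedBall (0 : RN N) k with hK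
    have hKclosed : IsClosed K := isClosed_frontier.inter Metric.isClosed_closedBall
    have hKcomp : IsCompact K :=
      ((Metric.isBounded_closedBall.subset Set.inter_subset_right).isCompact_closure).of_isClosed_subset
        hKclosed subset_closure
    have hcover : K ⊆ ⋃ p : {y : RN N // y ∈ frontier E}, Metric.ball p.1 (ρ p.1) := by
      intro w hw
      exact Set.mem_iUnion.2 ⟨⟨w, hw.1⟩, Metric.mem_ball_self (hρpos w hw.1)⟩
    obtain ⟨t, ht⟩ := hKcomp.elim_finite_subcover _ (fun p => Metric.isOpen_ball) hcover
    have hsub : K ⊆ ⋃ p ∈ t, (frontier E ∩ Metric.ball p.1 (ρ p.1)) := by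
      intro w hw
      obtain ⟨p, hpt, hwp⟩ := Set.mem_iUnion₂.1 (ht hw)
      exact Set.mem_iUnion₂.2 ⟨p, hpt, hw.1, hwp⟩
    apply measure_mono_null hsub
    exact (measure_biUnion_null_iff t.countable_toSet).2 fun p hp => hρnull p.1 p.2
  have hcover : frontier E = ⋃ k : ℕ, (frontier E ∩ Metric.closedBall (0 : RN N) k) := by
    ext x
    simp only [Set.mem_iUnion, Set.mem_inter_iff]
    constructor
    · intro hx
      obtain ⟨k, hk'⟩ := exists_nat_ge ‖x‖
      exact ⟨k, hx, by simpa [Metric.mem_closedBall, dist_zero_right] using hk'⟩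
    · rintro ⟨k, hx, _⟩; exact hx
  rw [hcover]
  exact measure_iUnion_null hk

/-! ### further step-function lemmas -/

lemma stepFn_deriv_eq_zero_of_neg {a t : ℝ} (ha : 0 < a) (ht : t < 0) :
    deriv (stepFn a) t = 0 := by
  have hev : stepFn a =ᶠ[nhds t] fun _ => 1 := by
    filter_upwards [isOpen_Iio.mem_nhds ht] with s hs
    exact stepFn_one ha (le_of_lt hs)
  rw [hev.deriv_eq, deriv_const]

lemma stepFn_deriv_eq_zero_of_gt {a t : ℝ} (ha : 0 < a) (ht : a < t) :
    deriv (stepFn a) t = 0 := by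
  have hev : stepFn a =ᶠ[nhds t] fun _ => 0 := by
    filter_upwards [isOpen_Ioi.mem_nhds ht] with s hs
    exact stepFn_zero ha (le_of_lt hs)
  rw [hev.deriv_eq, deriv_const]

lemma stepFn_hasDerivAt {a : ℝ} (t : ℝ) :
    HasDerivAt (stepFn a) (deriv (stepFn a) t) t :=
  (((stepFn_contDiff a (n := 1)).differentiable (by simp)) t).hasDerivAt

/-! ### the bump profile ψ -/

/-- profile function: `1` on `[-δ/4, δ/4]`, `0` outside `(-δ/2, δ/2)` -/
def bumpProfile (δ t : ℝ) : ℝ :=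
  stepFn (δ/4) (t - δ/4) * stepFn (δ/4) (-t - δ/4)

lemma bumpProfile_contDiff (δ : ℝ) {n : ℕ∞} : ContDiff ℝ n fun t => bumpProfile δ t := by
  unfold bumpProfile
  exact ((stepFn_contDiff (δ/4)).comp (contDiff_id.sub contDiff_const)).mul
    ((stepFn_contDiff (δ/4)).comp (contDiff_id.neg.sub contDiff_const))

lemma bumpProfile_one {δ t : ℝ} (hδ : 0 < δ) (ht : |t| ≤ δ/4) : bumpProfile δ t = 1 := by
  rw [abs_le] at ht
  unfold bumpProfile
  rw [stepFn_one (by linarith) (by linarith), stepFn_one (by linarith) (by linarith), mul_one]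

lemma bumpProfile_zero {δ t : ℝ} (hδ : 0 < δ) (ht : δ/2 ≤ |t|) : bumpProfile δ t = 0 := by
  unfold bumpProfile
  rcases le_abs'.1 ht with h | h
  · rw [stepFn_zero (by linarith) (t := -t - δ/4) (by linarith), mul_zero]
  · rw [stepFn_zero (by linarith) (t := t - δ/4) (by linarith), zero_mul]

lemma bumpProfile_nonneg (δ t : ℝ) : 0 ≤ bumpProfile δ t :=
  mul_nonneg (stepFn_nonneg _ _) (stepFn_nonneg _ _)

lemma bumpProfile_le_one (δ t : ℝ) : bumpProfile δ t ≤ 1 :=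
  mul_le_one₀ (stepFn_le_one _ _) (stepFn_nonneg _ _) (stepFn_le_one _ _)

/-! ### the extended normal field and the key comparison -/

lemma key_field {E : Set (RN N)} (hmeas : MeasurableSet E) (hper : PerSet N E)
    (hsm : SmoothBdry N 2 E) (hfr : (frontier E).Nonempty) :
    ∃ XE : RN N → RN N, ContDiff ℝ 1 XE ∧ PerFun N XE ∧ (∀ x, ‖XE x‖ ≤ 1) ∧
      ∀ X : RN N → RN N, ContDiff ℝ 1 X → PerFun N X → (∀ x, ‖X x‖ ≤ 1) →
        ∫ x in E ∩ Qcube N, divg N X x ≤ ∫ x in E ∩ Qcube N, divg N XE x := by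
  obtain ⟨δ, hδ, htube⟩ := tube_lemma hper hsm hfr
  set D := sd N E with hDdef
  have hDc : Continuous D := sd_continuous
  have hDper : PerFun N D := sd_periodic hper
  have habs : ∀ x, |D x| = Metric.infDist x (frontier E) := fun x => abs_sd x
  have htube' : ∀ x : RN N, |D x| < δ → ContDiffAt ℝ 2 D x ∧ 1/2 ≤ ‖gradient D x‖ :=
    fun x hx => htube x (by rw [← habs x]; exact hx)
  set XE : RN N → RN N := fun x => bumpProfile δ (D x) • (‖gradient D x‖)⁻¹ • gradient D x
    with hXEdef
  -- smoothness of XE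
  have hXEsmooth : ContDiff ℝ 1 XE := by
    rw [contDiff_iff_contDiffAt]
    intro x
    by_cases hx : |D x| < δ
    · obtain ⟨hCD, hgr⟩ := htube' x hx
      have hgradCD : ContDiffAt ℝ 1 (fun w => gradient D w) x := by
        have h1 : ContDiffAt ℝ 1 (fderiv ℝ D) x := hCD.fderiv_right (by norm_num)
        exact ((InnerProductSpace.toDual ℝ (RN N)).symm.contDiff.contDiffAt).comp x h1
      have hgne : gradient D x ≠ 0 := by
        intro h0; rw [h0, norm_zero] at hgr; linarith
      have hnorm : ContDiffAt ℝ 1 (fun w => ‖gradient D w‖) x := hgradCD.norm ℝ hgne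
      have hnne : ‖gradient D x‖ ≠ 0 := norm_ne_zero_iff.2 hgne
      have hinv : ContDiffAt ℝ 1 (fun w => (‖gradient D w‖)⁻¹) x := hnorm.inv hnne
      have hψD : ContDiffAt ℝ 1 (fun w => bumpProfile δ (D w)) x :=
        ((bumpProfile_contDiff δ).contDiffAt).comp x (hCD.of_le (by exact_mod_cast one_le_two))
      exact hψD.smul (hinv.smul hgradCD)
    · have hVx : δ/2 < |D x| := by
        push_neg at hx
        linarith
      have hV : {w : RN N | δ/2 < |D w|} ∈ nhds x :=
        (isOpen_lt continuous_const (hDc.abs)).mem_nhds hVx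
      apply ContDiffAt.congr_of_eventuallyEq (contDiffAt_const (c := (0 : RN N)))
      filter_upwards [hV] with w hw
      show XE w = 0
      rw [hXEdef]
      simp only
      rw [bumpProfile_zero hδ (le_of_lt hw), zero_smul]
  -- periodicity of XE
  have hXEper : PerFun N XE := by
    intro z x
    rw [hXEdef]
    simp only
    rw [hDper z x, gradient_periodic hDper z x]
  -- norm bound
  have hXEnorm : ∀ x, ‖XE x‖ ≤ 1 := by
    intro x
    rw [hXEdef]
    simp only
    by_cases hg : gradient D x = 0
    · rw [hg, smul_zero, smul_zero, norm_zero]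
      norm_num
    · rw [norm_smul, norm_smul, norm_inv, norm_norm,
        inv_mul_cancel₀ (norm_ne_zero_iff.2 hg), mul_one, Real.norm_eq_abs,
        abs_of_nonneg (bumpProfile_nonneg δ (D x))]
      exact bumpProfile_le_one δ (D x)
  refine ⟨XE, hXEsmooth, hXEper, hXEnorm, ?_⟩
  intro X hX1 hXper hX1le
  -- approximations of the indicator function of E
  set ε : ℕ → ℝ := fun n => δ/8 / (n+1) with hε
  have hεpos : ∀ n, 0 < ε n := fun n => by rw [hε]; positivity
  have hεle : ∀ n, ε n ≤ δ/8 := by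
    intro n
    rw [hε]
    simp only
    apply div_le_self (by linarith)
    have : (0:ℝ) ≤ n := Nat.cast_nonneg n
    linarith
  set u : ℕ → RN N → ℝ := fun n x => stepFn (ε n) (D x) with hu
  have husmooth : ∀ n, ContDiff ℝ 1 (u n) := by
    intro n
    rw [contDiff_iff_contDiffAt]
    intro x
    by_cases hx : |D x| < δ
    · exact ((stepFn_contDiff (ε n)).contDiffAt).comp x
        (((htube' x hx).1).of_le (by exact_mod_cast one_le_two))
    · push_neg at hx
      rcases le_abs'.1 hx with hneg | hpos
      · have hV : {w : RN N | D w < 0} ∈ nhds x :=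
          (isOpen_lt hDc continuous_const).mem_nhds (by show D x < 0; linarith)
        apply ContDiffAt.congr_of_eventuallyEq (contDiffAt_const (c := (1:ℝ)))
        filter_upwards [hV] with w hw
        exact stepFn_one (hεpos n) (le_of_lt hw)
      · have hV : {w : RN N | ε n < D w} ∈ nhds x := by
          apply (isOpen_lt continuous_const hDc).mem_nhds
          show ε n < D x
          have := hεle n
          linarith
        apply ContDiffAt.congr_of_eventuallyEq (contDiffAt_const (c := (0:ℝ)))
        filter_upwards [hV] with w hw
        exact stepFn_zero (hεpos n) (le_of_lt hw)
  have huper : ∀ n, PerFun N (u n) := by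
    intro n z x
    rw [hu]
    simp only
    rw [hDper z x]
  -- pointwise comparison of the two pairings
  have hpair : ∀ n (x : RN N), fderiv ℝ (u n) x (XE x) ≤ fderiv ℝ (u n) x (X x) := by
    intro n x
    by_cases hx : |D x| < δ
    · obtain ⟨hCD, hgr⟩ := htube' x hx
      have hDdiff : DifferentiableAt ℝ D x := hCD.differentiableAt (by simp)
      have hchain : HasFDerivAt (u n) ((deriv (stepFn (ε n)) (D x)) • fderiv ℝ D x) x := by
        have h1 := stepFn_hasDerivAt (a := ε n) (D x)
        exact h1.comp_hasFDerivAt x hDdiff.hasFDerivAt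
      rw [hchain.fderiv]
      simp only [ContinuousLinearMap.coe_smul', Pi.smul_apply, smul_eq_mul]
      set z' := deriv (stepFn (ε n)) (D x) with hz'
      by_cases hzero : z' = 0
      · rw [hzero]; simp
      · have hrange : 0 ≤ D x ∧ D x ≤ ε n := by
          constructor
          · by_contra hc; push_neg at hc
            exact hzero (stepFn_deriv_eq_zero_of_neg (hεpos n) hc)
          · by_contra hc; push_neg at hc
            exact hzero (stepFn_deriv_eq_zero_of_gt (hεpos n) hc)
        have hψ1 : bumpProfile δ (D x) = 1 := by
          apply bumpProfile_one hδ
          rw [abs_le]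
          have := hεle n
          constructor <;> linarith [hrange.1, hrange.2]
        have hζneg : z' ≤ 0 := stepFn_deriv_nonpos (hεpos n) (D x)
        have hXEval : fderiv ℝ D x (XE x) = ‖gradient D x‖ := by
          rw [← fderiv_inner_gradient]
          rw [hXEdef]
          simp only
          rw [hψ1, one_smul, real_inner_smul_right, real_inner_self_eq_norm_mul_norm]
          have hgne : ‖gradient D x‖ ≠ 0 := by intro h; rw [h] at hgr; linarith
          field_simp
        have hXval : fderiv ℝ D x (X x) ≤ ‖gradient D x‖ := by
          rw [← fderiv_inner_gradient]
          calc ⟪gradient D x, X x⟫ ≤ ‖gradient D x‖ * ‖X x‖ := real_inner_le_norm _ _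
            _ ≤ ‖gradient D x‖ * 1 := mul_le_mul_of_nonneg_left (hX1le x) (norm_nonneg _)
            _ = ‖gradient D x‖ := mul_one _
        calc z' * fderiv ℝ D x (XE x) = z' * ‖gradient D x‖ := by rw [hXEval]
          _ ≤ z' * fderiv ℝ D x (X x) := mul_le_mul_of_nonpos_left hXval hζneg
    · have hfz : fderiv ℝ (u n) x = 0 := by
        push_neg at hx
        rcases le_abs'.1 hx with hneg | hpos
        · have hV : {w : RN N | D w < 0} ∈ nhds x :=
            (isOpen_lt hDc continuous_const).mem_nhds (by show D x < 0; linarith)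
          have hev : u n =ᶠ[nhds x] fun _ => (1:ℝ) := by
            filter_upwards [hV] with w hw
            exact stepFn_one (hεpos n) (le_of_lt hw)
          rw [hev.fderiv_eq]
          exact fderiv_const_apply 1
        · have hV : {w : RN N | ε n < D w} ∈ nhds x := by
            apply (isOpen_lt continuous_const hDc).mem_nhds
            show ε n < D x
            have := hεle n
            linarith
          have hev : u n =ᶠ[nhds x] fun _ => (0:ℝ) := by
            filter_upwards [hV] with w hw
            exact stepFn_zero (hεpos n) (le_of_lt hw)
          rw [hev.fderiv_eq]
          exact fderiv_const_apply 0
      rw [hfz]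
      simp
  -- integration by parts gives the comparison for each n
  have hIBP : ∀ n, (∫ x in Qcube N, u n x * divg N X x)
      ≤ ∫ x in Qcube N, u n x * divg N XE x := by
    intro n
    rw [torus_ibp (husmooth n) hX1 (huper n) hXper,
      torus_ibp (husmooth n) hXEsmooth (huper n) hXEper]
    apply neg_le_neg
    apply setIntegral_mono_on
      (integrableOn_subQ (continuous_pairing (husmooth n) hXEsmooth.continuous) (subset_refl _))
      (integrableOn_subQ (continuous_pairing (husmooth n) hX1.continuous) (subset_refl _))
      measurableSet_Qcube
    intro x _
    exact hpair n x
  -- passing to the limit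
  have hlim : ∀ Z : RN N → RN N, ContDiff ℝ 1 Z →
      Filter.Tendsto (fun n => ∫ x in Qcube N, u n x * divg N Z x) Filter.atTop
        (nhds (∫ x in E ∩ Qcube N, divg N Z x)) := by
    intro Z hZ
    have hbound : Integrable (fun x => |divg N Z x|) (volume.restrict (Qcube N)) :=
      integrableOn_Qcube (continuous_divg hZ).abs
    have hmeasEU : MeasurableSet (E ∪ frontier E) := hmeas.union isClosed_frontier.measurableSet
    have hptlim : ∀ x : RN N, Filter.Tendsto (fun n => u n x * divg N Z x) Filter.atTop
        (nhds ((E ∪ frontier E).indicator (divg N Z) x)) := by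
      intro x
      by_cases hx : D x ≤ 0
      · have hind : (E ∪ frontier E).indicator (divg N Z) x = divg N Z x :=
          Set.indicator_of_mem ((sd_nonpos_iff hfr x).1 hx) _
        rw [hind]
        have hux : ∀ n : ℕ, u n x * divg N Z x = divg N Z x := by
          intro n
          rw [hu]
          simp only
          rw [stepFn_one (hεpos n) hx, one_mul]
        rw [show (fun n => u n x * divg N Z x) = fun _ => divg N Z x from funext hux]
        exact tendsto_const_nhds
      · push_neg at hx
        have hind : (E ∪ frontier E).indicator (divg N Z) x = 0 :=
          Set.indicator_of_notMem
            (fun hmem => absurd ((sd_nonpos_iff hfr x).2 hmem) (not_le.2 hx)) _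
        rw [hind]
        obtain ⟨n₀, hn₀⟩ := exists_nat_gt (δ/8 / D x)
        have hev : ∀ᶠ n : ℕ in Filter.atTop, u n x * divg N Z x = 0 := by
          filter_upwards [Filter.eventually_ge_atTop n₀] with n hn
          have hstep : ε n ≤ D x := by
            rw [hε]
            simp only
            rw [div_le_iff₀ (by positivity)]
            have h8 : (0:ℝ) < δ/8 := by linarith
            have h1 : δ/8 / D x < (n:ℝ) + 1 := by
              have : (n₀:ℝ) ≤ n := Nat.cast_le.2 hn
              linarith
            rw [div_lt_iff₀ hx] at h1
            linarith
          rw [hu]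
          simp only
          rw [stepFn_zero (hεpos n) hstep, zero_mul]
        exact Filter.Tendsto.congr' (Filter.EventuallyEq.symm hev) tendsto_const_nhds
    have hid : ∫ x in Qcube N, (E ∪ frontier E).indicator (divg N Z) x
        = ∫ x in E ∩ Qcube N, divg N Z x := by
      rw [setIntegral_indicator hmeasEU]
      apply setIntegral_congr_set
      rw [MeasureTheory.ae_eq_set]
      constructor
      · apply measure_mono_null ?_ (frontier_null hper hsm)
        rintro x ⟨⟨hxQ, hxEU⟩, hxn⟩
        rcases hxEU with hxE | hxF
        · exact absurd ⟨hxE, hxQ⟩ hxn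
        · exact hxF
      · have hempty : (E ∩ Qcube N) \ (Qcube N ∩ (E ∪ frontier E)) = ∅ := by
          apply Set.eq_empty_iff_forall_notMem.2
          rintro x ⟨⟨hxE, hxQ⟩, hxn⟩
          exact hxn ⟨hxQ, Or.inl hxE⟩
        rw [hempty]
        exact measure_empty
    rw [← hid]
    apply tendsto_integral_of_dominated_convergence _ ?_ hbound ?_ ?_
    · intro n
      exact ((husmooth n).continuous.mul (continuous_divg hZ)).aestronglyMeasurable
    · intro n
      apply Filter.Eventually.of_forall
      intro x
      rw [Real.norm_eq_abs, abs_mul]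
      have h1 : |u n x| ≤ 1 := by
        rw [hu]
        simp only
        rw [abs_of_nonneg (stepFn_nonneg _ _)]
        exact stepFn_le_one _ _
      calc |u n x| * |divg N Z x| ≤ 1 * |divg N Z x| :=
            mul_le_mul_of_nonneg_right h1 (abs_nonneg _)
        _ = |divg N Z x| := one_mul _
    · exact Filter.Eventually.of_forall hptlim
  exact le_of_tendsto_of_tendsto' (hlim X hX1) (hlim XE hXEsmooth) hIBP

end Aux

/-- Lemma 4.1: for `E` of class `C²` and any set of finite perimeter
`F`, `P(F) - P(E) ≥ -C |E Δ F|`. -/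
theorem stmt12 (N : ℕ) (E : Set (RN N))
    (hmeas : MeasurableSet E) (hper : PerSet N E) (hsm : SmoothBdry N 2 E) :
    ∃ C : ℝ, 0 < C ∧
      ∀ F : Set (RN N), PerSet N F → MeasurableSet F → tper N F ≠ ⊤ →
        tper N E ≤ tper N F + ENNReal.ofReal (C * (tvol N (symmDiff E F)).toReal) := by
  classical
  rcases (frontier E).eq_empty_or_nonempty with hfr | hfr
  · -- degenerate case: `E` is clopen, hence `∅` or `univ`, and `tper E = 0`
    have hclopen : IsClopen E := isClopen_iff_frontier_eq_empty.2 hfr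
    have htper0 : tper N E = 0 := by
      apply le_antisymm ?_ zero_le
      apply iSup_le
      rintro ⟨X, hX1, hXper, hXnorm⟩
      have hz : (∫ x in E ∩ Qcube N, divg N X x) = 0 := by
        rcases isClopen_iff.1 hclopen with rfl | rfl
        · simp
        · rw [Set.univ_inter]
          exact integral_divg_Qcube hX1 hXper
      simp only [hz, ENNReal.ofReal_zero, le_refl]
    rw [htper0]
    exact ⟨1, one_pos, fun F _ _ _ => zero_le⟩
  · -- main case
    obtain ⟨XE, hXE1, hXEper, hXEnorm, hcomp⟩ := key_field hmeas hper hsm hfr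
    have hdivc : Continuous (divg N XE) := continuous_divg hXE1
    obtain ⟨C₀, hC₀⟩ :=
      (isBounded_Qcube.isCompact_closure).exists_bound_of_continuousOn hdivc.continuousOn
    set C₁ := max C₀ 0 with hC₁
    have hC₁nn : (0:ℝ) ≤ C₁ := le_max_right _ _
    have hbQ : ∀ x ∈ Qcube N, |divg N XE x| ≤ C₁ := by
      intro x hx
      calc |divg N XE x| = ‖divg N XE x‖ := (Real.norm_eq_abs _).symm
        _ ≤ C₀ := hC₀ x (subset_closure hx)
        _ ≤ C₁ := le_max_left _ _
    refine ⟨C₁ + 1, by linarith, ?_⟩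
    intro F hFper hFmeas hFfin
    set m := (tvol N (symmDiff E F)).toReal with hm
    have hm0 : (0:ℝ) ≤ m := ENNReal.toReal_nonneg
    -- split the integrals
    have hintEF : IntegrableOn (divg N XE) ((E ∩ F) ∩ Qcube N) volume :=
      integrableOn_subQ hdivc Set.inter_subset_right
    have hintE' : IntegrableOn (divg N XE) ((E \ F) ∩ Qcube N) volume :=
      integrableOn_subQ hdivc Set.inter_subset_right
    have hintF' : IntegrableOn (divg N XE) ((F \ E) ∩ Qcube N) volume :=
      integrableOn_subQ hdivc Set.inter_subset_right
    have hunE : (E ∩ F) ∩ Qcube N ∪ (E \ F) ∩ Qcube N = E ∩ Qcube N := by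
      rw [← Set.union_inter_distrib_right]
      congr 1
      ext x
      constructor
      · rintro (⟨h1, _⟩ | ⟨h1, _⟩) <;> exact h1
      · intro hx
        by_cases hxF : x ∈ F
        · exact Or.inl ⟨hx, hxF⟩
        · exact Or.inr ⟨hx, hxF⟩
    have hunF : (E ∩ F) ∩ Qcube N ∪ (F \ E) ∩ Qcube N = F ∩ Qcube N := by
      rw [← Set.union_inter_distrib_right]
      congr 1
      ext x
      constructor
      · rintro (⟨_, h2⟩ | ⟨h1, _⟩)
        · exact h2
        · exact h1
      · intro hx
        by_cases hxE : x ∈ E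
        · exact Or.inl ⟨hxE, hx⟩
        · exact Or.inr ⟨hx, hxE⟩
    have hdisjE : Disjoint ((E ∩ F) ∩ Qcube N) ((E \ F) ∩ Qcube N) := by
      apply Set.disjoint_left.2
      rintro x ⟨⟨_, hxF⟩, _⟩ ⟨⟨_, hxF'⟩, _⟩
      exact hxF' hxF
    have hdisjF : Disjoint ((E ∩ F) ∩ Qcube N) ((F \ E) ∩ Qcube N) := by
      apply Set.disjoint_left.2
      rintro x ⟨⟨hxE, _⟩, _⟩ ⟨⟨_, hxE'⟩, _⟩
      exact hxE' hxE
    have hEsplit : ∫ x in E ∩ Qcube N, divg N XE x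
        = (∫ x in (E ∩ F) ∩ Qcube N, divg N XE x) + ∫ x in (E \ F) ∩ Qcube N, divg N XE x := by
      rw [← hunE, setIntegral_union hdisjE ((hmeas.diff hFmeas).inter measurableSet_Qcube)
        hintEF hintE']
    have hFsplit : ∫ x in F ∩ Qcube N, divg N XE x
        = (∫ x in (E ∩ F) ∩ Qcube N, divg N XE x) + ∫ x in (F \ E) ∩ Qcube N, divg N XE x := by
      rw [← hunF, setIntegral_union hdisjF ((hFmeas.diff hmeas).inter measurableSet_Qcube)
        hintEF hintF']
    -- bound the two extra pieces
    have hvol : ∀ s : Set (RN N), volume (s ∩ Qcube N) < ⊤ := fun s =>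
      lt_of_le_of_lt (measure_mono Set.inter_subset_right) volume_Qcube_lt_top
    have hb1 : |∫ x in (E \ F) ∩ Qcube N, divg N XE x|
        ≤ C₁ * (volume ((E \ F) ∩ Qcube N)).toReal := by
      rw [← Real.norm_eq_abs]
      apply norm_setIntegral_le_of_norm_le_const (hvol _)
      · intro x hx
        rw [Real.norm_eq_abs]
        exact hbQ x hx.2
    have hb2 : |∫ x in (F \ E) ∩ Qcube N, divg N XE x|
        ≤ C₁ * (volume ((F \ E) ∩ Qcube N)).toReal := by
      rw [← Real.norm_eq_abs]
      apply norm_setIntegral_le_of_norm_le_const (hvol _)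
      · intro x hx
        rw [Real.norm_eq_abs]
        exact hbQ x hx.2
    -- identify m
    have hmeq : m = (volume ((E \ F) ∩ Qcube N)).toReal
        + (volume ((F \ E) ∩ Qcube N)).toReal := by
      have hsd : symmDiff E F ∩ Qcube N = ((E \ F) ∩ Qcube N) ∪ ((F \ E) ∩ Qcube N) := by
        rw [Set.symmDiff_def, Set.union_inter_distrib_right]
      have hdisj : Disjoint ((E \ F) ∩ Qcube N) ((F \ E) ∩ Qcube N) := by
        apply Set.disjoint_left.2
        rintro x ⟨⟨hxE, _⟩, _⟩ ⟨⟨_, hxE'⟩, _⟩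
        exact hxE' hxE
      have : tvol N (symmDiff E F) = volume (((E \ F) ∩ Qcube N) ∪ ((F \ E) ∩ Qcube N)) := by
        show volume (symmDiff E F ∩ Qcube N) = _
        rw [hsd]
      rw [hm, this, measure_union hdisj ((hFmeas.diff hmeas).inter measurableSet_Qcube),
        ENNReal.toReal_add (hvol _).ne (hvol _).ne]
    -- the real inequality
    have hA : (∫ x in E ∩ Qcube N, divg N XE x)
        ≤ (∫ x in F ∩ Qcube N, divg N XE x) + C₁ * m := by
      rw [hEsplit, hFsplit, hmeq, mul_add]
      have e1 := (abs_le.1 hb1).2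
      have e2 := (abs_le.1 hb2).1
      linarith
    -- assemble in ℝ≥0∞
    have hup : tper N E ≤ ENNReal.ofReal ((∫ x in F ∩ Qcube N, divg N XE x) + C₁ * m) := by
      apply iSup_le
      rintro ⟨X, hX1, hXper, hXnorm⟩
      apply ENNReal.ofReal_le_ofReal
      exact le_trans (hcomp X hX1 hXper hXnorm) hA
    have hlow : ENNReal.ofReal (∫ x in F ∩ Qcube N, divg N XE x) ≤ tper N F :=
      le_iSup (fun X : {X : RN N → RN N // ContDiff ℝ 1 X ∧ PerFun N X ∧ ∀ x, ‖X x‖ ≤ 1} =>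
        ENNReal.ofReal (∫ x in F ∩ Qcube N, divg N X.1 x)) ⟨XE, hXE1, hXEper, hXEnorm⟩
    calc tper N E ≤ ENNReal.ofReal ((∫ x in F ∩ Qcube N, divg N XE x) + C₁ * m) := hup
      _ ≤ ENNReal.ofReal (∫ x in F ∩ Qcube N, divg N XE x) + ENNReal.ofReal (C₁ * m) :=
          ENNReal.ofReal_add_le
      _ ≤ tper N F + ENNReal.ofReal ((C₁ + 1) * m) := by
          apply add_le_add hlow
          apply ENNReal.ofReal_le_ofReal
          nlinarith
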